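/- Let F ≤ E ≤ L be a tower of finite Galois extensions of a non-archimedean local field F. Then for every s ∈ ℝ, the trace map satisfies Tr_{L/E}[L_{≥ s}] = E_{≥ s + c_{L/E}}. -/

import Mathlib

noncomputable section

/-- The minimum of an extended real `d` and a real `x`, as a real number. -/
def rmin (d : WithTop ℝ) (x : ℝ) : ℝ := WithTop.untopD x (min d (x : WithTop ℝ))

/-- `v` is an additive (`WithTop ℝ`-valued) valuation on the field `K`. -/
structure IsValuation {K : Type*} [Field K] (v : K → WithTop ℝ) : Prop where
  map_zero : v 0 = ⊤
  ne_top : ∀ x : K, x ≠ 0 → v x ≠ ⊤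
  map_mul : ∀ x y : K, v (x * y) = v x + v y
  min_le_map_add : ∀ x y : K, min (v x) (v y) ≤ v (x + y)

/-- `π` is a uniformizer for `v`: an element of minimal positive valuation. -/
def IsUnif {K : Type*} (v : K → WithTop ℝ) (π : K) : Prop :=
  0 < v π ∧ v π ≠ ⊤ ∧ ∀ x : K, 0 < v x → v π ≤ v x

variable (E L : Type*) [Field E] [Field L] [Algebra E L]

/-- The inertia subgroup `Γ(L/E)` of `Gal(L/E)`. -/
def inertia (v : L → WithTop ℝ) : Set (L ≃ₐ[E] L) :=
  {σ | ∀ x : L, 0 ≤ v x → 0 < v (σ x - x)}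

/-- `depth_{L/E}(σ) := val((σ(π) − π)/π)` for a uniformizer `π`. -/
def ramDepth (v : L → WithTop ℝ) (π : L) (σ : L ≃ₐ[E] L) : WithTop ℝ :=
  v ((σ π - π) / π)

/-- The lower-numbering ramification group `Γ(L/E)_r`. -/
def lowerRam (v : L → WithTop ℝ) (π : L) (r : ℝ) : Set (L ≃ₐ[E] L) :=
  {σ ∈ inertia E L v | (r : WithTop ℝ) ≤ ramDepth E L v π σ}

/-- `ℓ(L/E)`, the last break in the lower numbering. -/
def ell (v : L → WithTop ℝ) (π : L) : ℝ :=
  sInf {r : ℝ | 0 ≤ r ∧ lowerRam E L v π r = {1}}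

/-- The normalized Hasse–Herbrand function `φ_{L/E}`. -/
def hhPhi (v : L → WithTop ℝ) (π : L) (x : ℝ) : ℝ :=
  ∑ᶠ σ ∈ inertia E L v, rmin (ramDepth E L v π σ) x

/-- `ψ_{L/E}`, the inverse of `φ_{L/E}`. -/
def hhPsi (v : L → WithTop ℝ) (π : L) : ℝ → ℝ :=
  Function.invFun (hhPhi E L v π)

/-- The upper-numbering ramification group `Γ(L/E)^s = Γ(L/E)_{ψ_{L/E}(s)}`. -/
def upperRam (v : L → WithTop ℝ) (π : L) (s : ℝ) : Set (L ≃ₐ[E] L) :=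
  lowerRam E L v π (hhPsi E L v π s)

/-- `u(L/E)`, the last break in the upper numbering. -/
def uBreak (v : L → WithTop ℝ) (π : L) : ℝ :=
  sInf {s : ℝ | 0 ≤ s ∧ upperRam E L v π s = {1}}

/-- The ramification index `e(L/E)`, read off from the value groups. -/
def ramIdx (v : L → WithTop ℝ) : ℕ :=
  sInf {n : ℕ | 0 < n ∧ ∃ (πE : E) (πL : L),
    IsUnif (fun y : E => v (algebraMap E L y)) πE ∧ IsUnif v πL ∧
    v (algebraMap E L πE) = n • v πL}

/-- `K_{≥ s} = {x ∈ K : val x ≥ s}`. -/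
def ballGE {K : Type*} (v : K → WithTop ℝ) (s : ℝ) : Set K :=
  {x | (s : WithTop ℝ) ≤ v x}

/-- `K_{> s} = {x ∈ K : val x > s}`. -/
def ballGT {K : Type*} (v : K → WithTop ℝ) (s : ℝ) : Set K :=
  {x | (s : WithTop ℝ) < v x}

/-- `K^×_{≥ s}`: the units of the valuation ring for `s = 0`, and `1 + K_{≥ s}` for `s > 0`. -/
def unitsGE {K : Type*} [Field K] (v : K → WithTop ℝ) (s : ℝ) : Set K :=
  if s = 0 then {x | v x = 0} else {x | (s : WithTop ℝ) ≤ v (x - 1)}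

/-- `K^×_{> s} = 1 + K_{> s}`. -/
def unitsGT {K : Type*} [Field K] (v : K → WithTop ℝ) (s : ℝ) : Set K :=
  {x | (s : WithTop ℝ) < v (x - 1)}

/-- The package of "local field" axioms for a finite extension `L/E`: `v` is a
Galois-invariant discrete valuation on `L` whose restriction to `E` makes `E` a
complete discretely valued field with finite residue field. -/
structure IsLocalData (v : L → WithTop ℝ) : Prop where
  isval : IsValuation v
  gal_inv : ∀ (σ : L ≃+* L) (x : L), v (σ x) = v x
  exists_unif_base : ∃ π : E, IsUnif (fun y : E => v (algebraMap E L y)) π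
  exists_unif : ∃ π : L, IsUnif v π
  discrete : ∀ π : L, IsUnif v π → ∀ x : L, x ≠ 0 →
    ∃ n : ℤ, v x = (((n : ℝ) * WithTop.untopD 0 (v π) : ℝ) : WithTop ℝ)
  residue_finite : ∃ S : Finset E, ∀ x : E, 0 ≤ v (algebraMap E L x) →
    ∃ y ∈ S, 0 < v (algebraMap E L (x - y))
  complete : ∀ a : ℕ → E, (∀ M : ℝ, ∃ N : ℕ, ∀ m, N ≤ m → ∀ n, N ≤ n →
      (M : WithTop ℝ) ≤ v (algebraMap E L (a m - a n))) →
    ∃ b : E, ∀ M : ℝ, ∃ N : ℕ, ∀ n, N ≤ n →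
      (M : WithTop ℝ) ≤ v (algebraMap E L (a n - b))

/-- Normalization: `val(F^×) = ℤ` (computed inside an extension `L'` of `F`). -/
structure IsNormalizedBase (F L' : Type*) [Field F] [Field L'] [Algebra F L']
    (v : L' → WithTop ℝ) : Prop where
  int_valued : ∀ x : F, x ≠ 0 → ∃ n : ℤ, v (algebraMap F L' x) = ((n : ℝ) : WithTop ℝ)
  int_surj : ∀ n : ℤ, ∃ x : F, x ≠ 0 ∧ v (algebraMap F L' x) = ((n : ℝ) : WithTop ℝ)

/-- `c_{Λ_K} := max { val x | x ∈ K, Λ_K(x) ≠ 1 }` where `Λ_K = Λ ∘ Tr_{K/F}` and the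
valuation of elements of `K` is computed inside `L'`. -/
def cLam (F K L' : Type*) [Field F] [Field K] [Field L'] [Algebra F K] [Algebra K L']
    (v : L' → WithTop ℝ) (Λ : AddChar F ℂ) : ℝ :=
  sSup {t : ℝ | ∃ x : K, Λ (Algebra.trace F K x) ≠ 1 ∧ v (algebraMap K L' x) = (t : WithTop ℝ)}

/-- `c_{L'/E'} := c_{Λ_{E'}} − c_{Λ_{L'}}`. -/
def cExt (F E' L' : Type*) [Field F] [Field E'] [Field L'] [Algebra F E'] [Algebra F L']
    [Algebra E' L'] (v : L' → WithTop ℝ) (Λ : AddChar F ℂ) : ℝ :=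
  cLam F E' L' v Λ - cLam F L' L' v Λ

/-- The additive character `Λ` is trivial on `𝔪_F` but nontrivial on `𝒪_F`. -/
structure IsAdaptedChar (F L' : Type*) [Field F] [Field L'] [Algebra F L']
    (v : L' → WithTop ℝ) (Λ : AddChar F ℂ) : Prop where
  trivial_on_m : ∀ x : F, 0 < v (algebraMap F L' x) → Λ x = 1
  nontrivial_on_O : ∃ x : F, 0 ≤ v (algebraMap F L' x) ∧ Λ x ≠ 1

/-- The "local field" axioms for an ambient (typically separably closed) extension
`Ω` of the non-archimedean local field `F`: `v` is a Galois-invariant valuation on `Ω`,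
normalized so that `val(F^×) = ℤ`, discrete on every finite subextension, and `F` is
complete with finite residue field. -/
structure IsLocalAmbient (F Ω : Type*) [Field F] [Field Ω] [Algebra F Ω]
    (v : Ω → WithTop ℝ) : Prop where
  isval : IsValuation v
  gal_inv : ∀ (σ : Ω ≃+* Ω) (x : Ω), v (σ x) = v x
  int_valued : ∀ x : F, x ≠ 0 → ∃ n : ℤ, v (algebraMap F Ω x) = ((n : ℝ) : WithTop ℝ)
  int_surj : ∀ n : ℤ, ∃ x : F, x ≠ 0 ∧ v (algebraMap F Ω x) = ((n : ℝ) : WithTop ℝ)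
  exists_unif : ∀ K : IntermediateField F Ω, FiniteDimensional F ↥K →
    ∃ π : ↥K, IsUnif (fun y : ↥K => v (y : Ω)) π
  residue_finite : ∃ S : Finset F, ∀ x : F, 0 ≤ v (algebraMap F Ω x) →
    ∃ y ∈ S, 0 < v (algebraMap F Ω (x - y))
  complete : ∀ a : ℕ → F, (∀ M : ℝ, ∃ N : ℕ, ∀ m, N ≤ m → ∀ n, N ≤ n →
      (M : WithTop ℝ) ≤ v (algebraMap F Ω (a m - a n))) →
    ∃ b : F, ∀ M : ℝ, ∃ N : ℕ, ∀ n, N ≤ n →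
      (M : WithTop ℝ) ≤ v (algebraMap F Ω (a n - b))

end

section auxlemmas

variable {K : Type*} [Field K] {v : K → WithTop ℝ}

lemma IsValuation.val_one (hv : IsValuation v) : v 1 = 0 := by
  have h := hv.map_mul 1 1
  rw [one_mul] at h
  obtain ⟨r, hr⟩ := WithTop.ne_top_iff_exists.mp (hv.ne_top 1 one_ne_zero)
  rw [← hr] at h ⊢
  have hr' : r = r + r := by exact_mod_cast h
  have h0 : r = 0 := by linarith
  rw [h0]
  rfl

lemma IsValuation.le_val_sum (hv : IsValuation v) {ι : Type*} (t : Finset ι) (f : ι → K)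
    (c : WithTop ℝ) : (∀ i ∈ t, c ≤ v (f i)) → c ≤ v (∑ i ∈ t, f i) := by
  classical
  induction t using Finset.cons_induction with
  | empty => intro _; rw [Finset.sum_empty, hv.map_zero]; exact le_top
  | cons a s ha ih =>
    intro h
    rw [Finset.sum_cons]
    exact le_trans (le_min (h a (Finset.mem_cons_self a s))
      (ih fun i hi => h i (Finset.mem_cons_of_mem hi))) (hv.min_le_map_add _ _)

lemma sSup_mem_of_discrete {S : Set ℝ} {δ : ℝ} (hδ : 0 < δ)
    (hS : S.Nonempty) (hbd : ∀ t ∈ S, t ≤ 0)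
    (hdisc : ∀ t ∈ S, ∃ n : ℤ, t = n * δ) :
    sSup S ∈ S := by
  have hbdd : BddAbove S := ⟨0, hbd⟩
  obtain ⟨t0, ht0⟩ := hS
  obtain ⟨n0, hn0⟩ := hdisc t0 ht0
  have hP : ∃ n : ℤ, ((n : ℝ) * δ) ∈ S := ⟨n0, hn0 ▸ ht0⟩
  have hPbd : ∃ b : ℤ, ∀ n : ℤ, ((n : ℝ) * δ) ∈ S → n ≤ b := by
    refine ⟨0, fun n hn => ?_⟩
    have h1 : (n : ℝ) * δ ≤ 0 := hbd _ hn
    by_contra hcon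
    push_neg at hcon
    have : (0:ℝ) < (n:ℝ) * δ := mul_pos (by exact_mod_cast hcon) hδ
    linarith
  obtain ⟨nmax, hmem, hub⟩ := Int.exists_greatest_of_bdd hPbd hP
  have heq : sSup S = (nmax : ℝ) * δ := by
    refine le_antisymm (csSup_le ⟨t0, ht0⟩ fun t ht => ?_) (le_csSup hbdd hmem)
    obtain ⟨n, rfl⟩ := hdisc t ht
    have h2 := hub n ht
    have h3 : (n : ℝ) ≤ (nmax : ℝ) := by exact_mod_cast h2
    exact mul_le_mul_of_nonneg_right h3 hδ.le
  rw [heq]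
  exact hmem

end auxlemmas

/-- For a tower `F ≤ E ≤ L` of finite Galois extensions of a
non-archimedean local field `F` and every `s ∈ ℝ`, the trace map satisfies
`Tr_{L/E}[L_{≥ s}] = E_{≥ s + c_{L/E}}`. -/
theorem trace_image_ballGE
    (F E L : Type*) [Field F] [Field E] [Field L]
    [Algebra F E] [Algebra E L] [Algebra F L] [IsScalarTower F E L]
    [FiniteDimensional F E] [FiniteDimensional E L] [FiniteDimensional F L]
    [IsGalois F E] [IsGalois F L] [IsGalois E L]
    (v : L → WithTop ℝ) (hv : IsLocalData F L v) (hnorm : IsNormalizedBase F L v)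
    (Λ : AddChar F ℂ) (hΛ : IsAdaptedChar F L v Λ)
    (s : ℝ) :
    (fun x : L => Algebra.trace E L x) '' ballGE v s
      = ballGE (fun y : E => v (algebraMap E L y)) (s + cExt F E L v Λ) := by
  classical
  -- basic facts about the valuation
  have hval : ∀ x : L, x ≠ 0 → ∃ r : ℝ, v x = (r : WithTop ℝ) := fun x hx =>
    (WithTop.ne_top_iff_exists.mp (hv.isval.ne_top x hx)).imp fun r h => h.symm
  obtain ⟨π, hπ⟩ := hv.exists_unif
  obtain ⟨d, hd⟩ := WithTop.ne_top_iff_exists.mp hπ.2.1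
  have hd0 : (0:ℝ) < d := by
    have h1 := hπ.1
    rw [← hd] at h1
    exact_mod_cast h1
  have hδ : WithTop.untopD 0 (v π) = d := by rw [← hd]; rfl
  have hdisc : ∀ x : L, x ≠ 0 → ∀ r : ℝ, v x = (r : WithTop ℝ) → ∃ n : ℤ, r = (n : ℝ) * d := by
    intro x hx r hr
    obtain ⟨n, hn⟩ := hv.discrete π hπ x hx
    rw [hδ, hr] at hn
    exact ⟨n, by exact_mod_cast hn⟩
  have hneE : ∀ x : E, x ≠ 0 → algebraMap E L x ≠ 0 := fun x hx h =>
    hx ((algebraMap E L).injective (by rw [h, map_zero]))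
  -- Galois invariance: valuation of trace is at least valuation of the element
  have key_sumL : ∀ x : L, v x ≤ v (algebraMap F L (Algebra.trace F L x)) := by
    intro x
    rw [trace_eq_sum_automorphisms]
    refine hv.isval.le_val_sum _ _ _ fun σ _ => ?_
    exact le_of_eq (hv.gal_inv σ.toRingEquiv x).symm
  have key_sumE : ∀ y : E, v (algebraMap E L y) ≤ v (algebraMap F L (Algebra.trace F E y)) := by
    intro y
    rw [IsScalarTower.algebraMap_apply F E L, trace_eq_sum_automorphisms, map_sum]
    refine hv.isval.le_val_sum _ _ _ fun σ _ => ?_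
    obtain ⟨τ, hτ⟩ := AlgEquiv.restrictNormalHom_surjective L σ
    have hcomm : algebraMap E L (σ y) = τ (algebraMap E L y) := by
      rw [← hτ]
      exact AlgEquiv.restrictNormal_commutes τ E y
    rw [hcomm]
    exact le_of_eq (hv.gal_inv τ.toRingEquiv (algebraMap E L y)).symm
  -- the sets defining the conductor constants
  set SE : Set ℝ := {t : ℝ | ∃ x : E, Λ (Algebra.trace F E x) ≠ 1 ∧
      v (algebraMap E L x) = (t : WithTop ℝ)} with hSEdef
  set SL : Set ℝ := {t : ℝ | ∃ x : L, Λ (Algebra.trace F L x) ≠ 1 ∧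
      v (algebraMap L L x) = (t : WithTop ℝ)} with hSLdef
  have hcE : cLam F E L v Λ = sSup SE := rfl
  have hcL : cLam F L L v Λ = sSup SL := rfl
  set cE : ℝ := sSup SE with hcEdef
  set cL : ℝ := sSup SL with hcLdef
  have hcext : cExt F E L v Λ = cE - cL := rfl
  -- boundedness of the conductor sets
  have hbdL : ∀ t ∈ SL, t ≤ 0 := by
    rintro t ⟨x, hΛx, hvx⟩
    rw [Algebra.algebraMap_self_apply] at hvx
    by_contra hcon
    push_neg at hcon
    refine hΛx (hΛ.trivial_on_m _ ?_)
    refine lt_of_lt_of_le ?_ (key_sumL x)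
    rw [hvx]
    exact_mod_cast hcon
  have hbdE : ∀ t ∈ SE, t ≤ 0 := by
    rintro t ⟨x, hΛx, hvx⟩
    by_contra hcon
    push_neg at hcon
    refine hΛx (hΛ.trivial_on_m _ ?_)
    refine lt_of_lt_of_le ?_ (key_sumE x)
    rw [hvx]
    exact_mod_cast hcon
  -- nonemptiness via surjectivity of the trace
  obtain ⟨x0, _, hx0⟩ := hΛ.nontrivial_on_O
  have hneL : SL.Nonempty := by
    obtain ⟨x, hx⟩ := Algebra.trace_surjective F L x0
    have hxne : x ≠ 0 := by
      intro h
      rw [h, map_zero] at hx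
      rw [← hx] at hx0
      exact hx0 (AddChar.map_zero_eq_one Λ)
    obtain ⟨r, hr⟩ := hval x hxne
    exact ⟨r, x, by rw [hx]; exact hx0, by rw [Algebra.algebraMap_self_apply]; exact hr⟩
  have hneSE : SE.Nonempty := by
    obtain ⟨x, hx⟩ := Algebra.trace_surjective F E x0
    have hxne : x ≠ 0 := by
      intro h
      rw [h, map_zero] at hx
      rw [← hx] at hx0
      exact hx0 (AddChar.map_zero_eq_one Λ)
    obtain ⟨r, hr⟩ := hval _ (hneE x hxne)
    exact ⟨r, x, by rw [hx]; exact hx0, hr⟩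
  -- discreteness of the conductor sets
  have hdiscL : ∀ t ∈ SL, ∃ n : ℤ, t = (n : ℝ) * d := by
    rintro t ⟨x, hΛx, hvx⟩
    rw [Algebra.algebraMap_self_apply] at hvx
    have hxne : x ≠ 0 := by
      intro h
      rw [h] at hvx
      rw [hv.isval.map_zero] at hvx
      exact (WithTop.coe_ne_top (a := t)) hvx.symm
    exact hdisc x hxne t hvx
  have hdiscE : ∀ t ∈ SE, ∃ n : ℤ, t = (n : ℝ) * d := by
    rintro t ⟨x, hΛx, hvx⟩
    have hxne : x ≠ 0 := by
      intro h
      rw [h, map_zero, hv.isval.map_zero] at hvx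
      exact (WithTop.coe_ne_top (a := t)) hvx.symm
    exact hdisc _ (hneE x hxne) t hvx
  -- the suprema are attained
  obtain ⟨yE, hΛyE, hvyE⟩ : cE ∈ SE := sSup_mem_of_discrete hd0 hneSE hbdE hdiscE
  obtain ⟨xL, hΛxL, hvxL⟩ : cL ∈ SL := sSup_mem_of_discrete hd0 hneL hbdL hdiscL
  rw [Algebra.algebraMap_self_apply] at hvxL
  -- upper bound lemmas
  have hubL : ∀ x : L, Λ (Algebra.trace F L x) ≠ 1 → v x ≤ (cL : WithTop ℝ) := by
    intro x hx
    have hxne : x ≠ 0 := by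
      intro h
      rw [h, map_zero] at hx
      exact hx (AddChar.map_zero_eq_one Λ)
    obtain ⟨r, hr⟩ := hval x hxne
    have hmem : r ∈ SL := ⟨x, hx, by rw [Algebra.algebraMap_self_apply]; exact hr⟩
    rw [hr]
    exact_mod_cast le_csSup ⟨0, hbdL⟩ hmem
  have hubE : ∀ y : E, Λ (Algebra.trace F E y) ≠ 1 → v (algebraMap E L y) ≤ (cE : WithTop ℝ) := by
    intro y hy
    have hyne : y ≠ 0 := by
      intro h
      rw [h, map_zero] at hy
      exact hy (AddChar.map_zero_eq_one Λ)
    obtain ⟨r, hr⟩ := hval _ (hneE y hyne)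
    have hmem : r ∈ SE := ⟨y, hy, hr⟩
    rw [hr]
    exact_mod_cast le_csSup ⟨0, hbdE⟩ hmem
  -- valuation of quotients in E
  have hdivval : ∀ p q : E, p ≠ 0 → q ≠ 0 → ∀ bp bq : ℝ,
      v (algebraMap E L p) = (bp : WithTop ℝ) → v (algebraMap E L q) = (bq : WithTop ℝ) →
      v (algebraMap E L (p / q)) = ((bp - bq : ℝ) : WithTop ℝ) := by
    intro p q hp hq bp bq hbp hbq
    have hpq : p / q ≠ 0 := div_ne_zero hp hq
    obtain ⟨a, ha⟩ := hval _ (hneE _ hpq)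
    have hmul : v (algebraMap E L p)
        = v (algebraMap E L (p / q)) + v (algebraMap E L q) := by
      rw [← hv.isval.map_mul, ← map_mul, div_mul_cancel₀ _ hq]
    rw [hbp, ha, hbq] at hmul
    have : bp = a + bq := by exact_mod_cast hmul
    rw [ha]
    norm_cast
    linarith
  -- trace transitivity: Λ_L = Λ_E ∘ Tr_{L/E}
  have htrans : ∀ x : L, Algebra.trace F E (Algebra.trace E L x) = Algebra.trace F L x :=
    fun x => Algebra.trace_trace x
  -- main argument
  ext z
  simp only [Set.mem_image, ballGE, Set.mem_setOf_eq]
  rw [hcext]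
  constructor
  · rintro ⟨x, hx, rfl⟩
    by_cases hTx : Algebra.trace E L x = 0
    · rw [hTx, map_zero, hv.isval.map_zero]
      exact le_top
    · have hxne : x ≠ 0 := by
        intro h
        rw [h, map_zero] at hTx
        exact hTx rfl
      obtain ⟨r, hr⟩ := hval x hxne
      have hsr : s ≤ r := by
        rw [hr] at hx
        exact_mod_cast hx
      obtain ⟨b, hb⟩ := hval _ (hneE _ hTx)
      rw [hb]
      by_contra hcon
      push_neg at hcon
      have hblt : b < s + (cE - cL) := by exact_mod_cast hcon
      -- scale by e = yE / trace x
      have hyEne : yE ≠ 0 := by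
        intro h
        rw [h, map_zero] at hΛyE
        exact hΛyE (AddChar.map_zero_eq_one Λ)
      set e : E := yE / Algebra.trace E L x with hedef
      have hΛex : Λ (Algebra.trace F L (e • x)) ≠ 1 := by
        rw [← htrans, map_smul, smul_eq_mul, hedef, div_mul_cancel₀ _ hTx]
        exact hΛyE
      have hle := hubL _ hΛex
      have hvex : v (e • x) = ((cE - b + r : ℝ) : WithTop ℝ) := by
        rw [Algebra.smul_def, hv.isval.map_mul,
          hdivval yE (Algebra.trace E L x) hyEne hTx cE b hvyE hb, hr]
        norm_cast
      rw [hvex] at hle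
      have : cE - b + r ≤ cL := by exact_mod_cast hle
      linarith
  · intro hz
    by_cases hz0 : z = 0
    · refine ⟨0, ?_, by rw [map_zero, hz0]⟩
      rw [hv.isval.map_zero]
      exact le_top
    · obtain ⟨w, hw⟩ := hval _ (hneE z hz0)
      have hsw : s + (cE - cL) ≤ w := by
        rw [hw] at hz
        exact_mod_cast hz
      set yL : E := Algebra.trace E L xL with hyLdef
      have hΛyL : Λ (Algebra.trace F E yL) ≠ 1 := by
        rw [hyLdef, htrans]
        exact hΛxL
      have hyLne : yL ≠ 0 := by
        intro h
        rw [h, map_zero] at hΛyL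
        exact hΛyL (AddChar.map_zero_eq_one Λ)
      obtain ⟨bE, hbE⟩ := hval _ (hneE _ hyLne)
      have hbEle : bE ≤ cE := by
        have := hubE _ hΛyL
        rw [hbE] at this
        exact_mod_cast this
      set e : E := z / yL with hedef
      refine ⟨e • xL, ?_, ?_⟩
      · have hvex : v (e • xL) = ((w - bE + cL : ℝ) : WithTop ℝ) := by
          rw [Algebra.smul_def, hv.isval.map_mul, hedef,
            hdivval z yL hz0 hyLne w bE hw hbE, hvxL]
          norm_cast
        rw [hvex]
        exact_mod_cast (by linarith : s ≤ w - bE + cL)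
      · rw [map_smul, smul_eq_mul, hedef, div_mul_cancel₀ _ hyLne]
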